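/- arXiv:1310.1803 — 2 statements merged into one kernel-verified Lean document; each statement's English description precedes it below -/
import Mathlib

section
/- If Pi_1 and Pi_2 are permutation matrices of size N = 2^n satisfying Pi_2 H_N = H_N Pi_1, where H_N is the N x N Hadamard matrix with entries (H_N)_{i,j} = (-1)^{<i,j>} under the binary-index identification, then the corresponding permutations pi_1, pi_2 of F_2^n are F_2-linear, i.e., they are given by matrices in GL(n, F_2). -/
/-- Inner product over `𝔽₂`. -/
def ip {ι : Type*} [Fintype ι] (u v : ι → ZMod 2) : ZMod 2 := ∑ t, u t * v t

/-- `(-1)^b` for `b ∈ 𝔽₂`. -/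
def sgn (a : ZMod 2) : ℝ := (-1 : ℝ) ^ a.val

lemma sgn_inj {a b : ZMod 2} (h : sgn a = sgn b) : a = b := by
  fin_cases a <;> fin_cases b <;>
    first
      | rfl
      | (exfalso; norm_num [sgn, ZMod.val, ZMod.val_one, ZMod.val_zero] at h)

lemma aux_isUnit {R : Type*} [CommRing R] {m : Type*} [Fintype m] [DecidableEq m]
    (e : (m → R) ≃ₗ[R] (m → R)) :
    IsUnit (LinearMap.toMatrix' (e : (m → R) →ₗ[R] (m → R))).det := by
  apply Matrix.isUnit_det_of_right_inverse
    (B := LinearMap.toMatrix' (e.symm : (m → R) →ₗ[R] (m → R)))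
  rw [← LinearMap.toMatrix'_comp]
  have h : ((e : (m → R) →ₗ[R] (m → R)) ∘ₗ (e.symm : (m → R) →ₗ[R] (m → R)))
      = LinearMap.id := by
    ext v
    simp
  rw [h, LinearMap.toMatrix'_id]

lemma aux_mulVec {R : Type*} [CommRing R] {m : Type*} [Fintype m] [DecidableEq m]
    (e : (m → R) ≃ₗ[R] (m → R)) (v : m → R) :
    e v = (LinearMap.toMatrix' (e : (m → R) →ₗ[R] (m → R))).mulVec v := by
  rw [← Matrix.toLin'_apply, Matrix.toLin'_toMatrix']
  rfl

lemma ip_single_right {ι : Type*} [Fintype ι] [DecidableEq ι] (u : ι → ZMod 2) (t : ι) :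
    ip u (Pi.single t 1) = u t := by
  simp [ip, Pi.single_apply, Finset.sum_ite_eq']

lemma ip_single_left {ι : Type*} [Fintype ι] [DecidableEq ι] (u : ι → ZMod 2) (t : ι) :
    ip (Pi.single t 1) u = u t := by
  simp [ip, Pi.single_apply, Finset.sum_ite_eq]

lemma ip_add_left {ι : Type*} [Fintype ι] (u v w : ι → ZMod 2) :
    ip (u + v) w = ip u w + ip v w := by
  simp [ip, add_mul, Finset.sum_add_distrib]

lemma ip_add_right {ι : Type*} [Fintype ι] (u v w : ι → ZMod 2) :
    ip u (v + w) = ip u v + ip u w := by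
  simp [ip, mul_add, Finset.sum_add_distrib]

@[simp] lemma ip_zero_left {ι : Type*} [Fintype ι] (u : ι → ZMod 2) : ip 0 u = 0 := by
  simp [ip]

@[simp] lemma ip_zero_right {ι : Type*} [Fintype ι] (u : ι → ZMod 2) : ip u 0 = 0 := by
  simp [ip]

/-- If two permutation matrices satisfy `Π₂ H = H Π₁` for the Hadamard matrix `H`,
then the corresponding permutations of `𝔽₂ⁿ` are linear, given by invertible matrices. -/
theorem stmt3 (n : ℕ) (π₁ π₂ : Equiv.Perm (Fin n → ZMod 2))
    (H : Matrix (Fin n → ZMod 2) (Fin n → ZMod 2) ℝ)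
    (hH : ∀ i j, H i j = sgn (ip i j))
    (P : Equiv.Perm (Fin n → ZMod 2) → Matrix (Fin n → ZMod 2) (Fin n → ZMod 2) ℝ)
    (hP : ∀ π i j, P π i j = if π i = j then (1 : ℝ) else 0)
    (hcomm : P π₂ * H = H * P π₁) :
    ∃ A B : Matrix (Fin n) (Fin n) (ZMod 2), IsUnit A.det ∧ IsUnit B.det ∧
      (∀ v, π₁ v = A.mulVec v) ∧ (∀ v, π₂ v = B.mulVec v) := by
  -- key identity
  have key : ∀ i j, ip (π₂ i) j = ip i (π₁⁻¹ j) := by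
    intro i j
    have h := congrFun (congrFun hcomm i) j
    rw [Matrix.mul_apply, Matrix.mul_apply] at h
    simp only [hP, hH, ite_mul, one_mul, zero_mul, mul_ite, mul_one, mul_zero] at h
    rw [Finset.sum_ite_eq Finset.univ (π₂ i)] at h
    have hc : ∀ k : Fin n → ZMod 2, (π₁ k = j) = (k = π₁⁻¹ j) := by
      intro k
      simp [Equiv.Perm.eq_inv_iff_eq, eq_comm]
      constructor <;> rintro rfl <;> simp
    simp only [hc] at h
    rw [Finset.sum_ite_eq' Finset.univ (π₁⁻¹ j)] at h
    simp only [Finset.mem_univ, if_true] at h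
    exact sgn_inj h
  -- separation lemmas
  have sepR : ∀ u v : Fin n → ZMod 2, (∀ j, ip u j = ip v j) → u = v := by
    intro u v h
    funext t
    have := h (Pi.single t 1)
    rwa [ip_single_right, ip_single_right] at this
  have sepL : ∀ u v : Fin n → ZMod 2, (∀ i, ip i u = ip i v) → u = v := by
    intro u v h
    funext t
    have := h (Pi.single t 1)
    rwa [ip_single_left, ip_single_left] at this
  -- π₂ additive, π₂ 0 = 0
  have h2zero : π₂ 0 = 0 := by
    apply sepR
    intro j
    rw [key]
    simp
  have h2add : ∀ x y, π₂ (x + y) = π₂ x + π₂ y := by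
    intro x y
    apply sepR
    intro j
    rw [key, ip_add_left, ip_add_left, key, key]
  -- π₁⁻¹ additive, π₁⁻¹ 0 = 0
  have h1izero : π₁⁻¹ (0 : Fin n → ZMod 2) = 0 := by
    apply sepL
    intro i
    rw [← key]
    simp
  have h1iadd : ∀ x y, π₁⁻¹ (x + y) = π₁⁻¹ x + π₁⁻¹ y := by
    intro x y
    apply sepL
    intro i
    rw [← key, ip_add_right, ip_add_right, ← key, ← key]
  -- π₁ additive, π₁ 0 = 0
  have h1zero : π₁ 0 = 0 := by
    have h := congrArg π₁ h1izero
    simpa using h.symm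
  have h1add : ∀ x y, π₁ (x + y) = π₁ x + π₁ y := by
    intro x y
    apply π₁.symm.injective
    have hsymm : ∀ z, π₁.symm z = π₁⁻¹ z := fun z => rfl
    rw [Equiv.symm_apply_apply, hsymm, h1iadd]
    change _ = π₁⁻¹ (π₁ x) + π₁⁻¹ (π₁ y)
    rw [show ∀ z, π₁⁻¹ z = π₁.symm z from fun z => rfl]
    simp
  -- smul from additivity over ZMod 2
  have hsmul : ∀ (π : Equiv.Perm (Fin n → ZMod 2)), π 0 = 0 →
      ∀ (c : ZMod 2) (x : Fin n → ZMod 2), π (c • x) = c • π x := by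
    intro π h0 c x
    fin_cases c
    · change π ((0 : ZMod 2) • x) = (0 : ZMod 2) • π x
      simpa using h0
    · change π ((1 : ZMod 2) • x) = (1 : ZMod 2) • π x
      simp
  -- linear equivalences
  let e₁ : (Fin n → ZMod 2) ≃ₗ[ZMod 2] (Fin n → ZMod 2) :=
    { π₁ with
      map_add' := h1add
      map_smul' := hsmul π₁ h1zero }
  let e₂ : (Fin n → ZMod 2) ≃ₗ[ZMod 2] (Fin n → ZMod 2) :=
    { π₂ with
      map_add' := h2add
      map_smul' := hsmul π₂ h2zero }
  exact ⟨LinearMap.toMatrix' e₁.toLinearMap, LinearMap.toMatrix' e₂.toLinearMap,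
    aux_isUnit e₁, aux_isUnit e₂, fun v => aux_mulVec e₁ v, fun v => aux_mulVec e₂ v⟩
end

section
/- Support estimation: suppose exactly one j' in the set {j : H j = k} satisfies X_{j'} != 0, where H = Psi_b^T Sigma^T with Sigma in GL(n,F_2) having columns sigma_1,...,sigma_n. Then for each d in [n-b], the ratio r_d = U_{Sigma, sigma_d}(k) / U_{Sigma,0}(k) equals (-1)^{<sigma_d, j'>}; and defining v_d = 1 if r_d < 0 and 0 otherwise (for d in [n-b], zero for d > n-b), the unique nonzero index is recovered as j' = Sigma^{-T}(Psi_b k + v). -/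
open Matrix Finset

/-- The Walsh-Hadamard transform. -/
noncomputable def WHT {ι : Type*} [DecidableEq ι] [Fintype ι]
    (x : (ι → ZMod 2) → ℝ) (k : ι → ZMod 2) : ℝ :=
  (Real.sqrt (Fintype.card (ι → ZMod 2)))⁻¹ * ∑ m, sgn (ip k m) * x m

/-- `Ψ_b : 𝔽₂ᵇ → 𝔽₂ⁿ`, placing a `b`-bit vector in the last `b` coordinates. -/
def Psi (n b : ℕ) (hb : b ≤ n) (m : Fin b → ZMod 2) : Fin n → ZMod 2 :=
  fun i => if _ : (i : ℕ) < n - b then 0 else m ⟨(i : ℕ) - (n - b), by have := i.isLt; omega⟩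

/-- `Ψ_bᵀ : 𝔽₂ⁿ → 𝔽₂ᵇ`, extracting the last `b` coordinates. -/
def PsiT (n b : ℕ) (hb : b ≤ n) (j : Fin n → ZMod 2) : Fin b → ZMod 2 :=
  fun t => j ⟨n - b + (t : ℕ), by have := t.isLt; omega⟩

lemma sgn_zero' : sgn 0 = 1 := by simp [sgn]
lemma sgn_ne_zero (a : ZMod 2) : sgn a ≠ 0 := by fin_cases a <;> simp [sgn, ZMod.val_one]
lemma sgn_neg_iff (a : ZMod 2) : sgn a < 0 ↔ a = 1 := by
  rcases (by decide : ∀ x : ZMod 2, x = 0 ∨ x = 1) a with rfl | rfl <;> simp [sgn, ZMod.val_one]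
open scoped Classical in
/-- Support estimation when a single nonzero coefficient is hashed to bin `k`. -/
theorem stmt9 (n b : ℕ) (hb : b < n)
    (A : Matrix (Fin n) (Fin n) (ZMod 2)) (hA : IsUnit A.det)
    (X : (Fin n → ZMod 2) → ℝ) (k : Fin b → ZMod 2) (j' : Fin n → ZMod 2)
    (hj' : PsiT n b hb.le (Aᵀ.mulVec j') = k) (hX : X j' ≠ 0)
    (huniq : ∀ j, PsiT n b hb.le (Aᵀ.mulVec j) = k → j ≠ j' → X j = 0) :
    let U : (Fin n → ZMod 2) → ℝ := fun p =>
      ∑ j ∈ Finset.univ.filter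
          (fun j : Fin n → ZMod 2 => PsiT n b hb.le (Aᵀ.mulVec j) = k),
        X j * sgn (ip p j)
    let col : Fin n → (Fin n → ZMod 2) := fun d t => A t d
    (∀ d : Fin n, (d : ℕ) < n - b → U (col d) / U 0 = sgn (ip (col d) j')) ∧
    j' = (A⁻¹)ᵀ.mulVec (Psi n b hb.le k +
      (fun i : Fin n => if (i : ℕ) < n - b ∧ U (col i) / U 0 < 0 then 1 else 0)) := by
  intro U col
  have hUcollapse : ∀ p, U p = X j' * sgn (ip p j') := by
    intro p
    refine Finset.sum_eq_single j' (fun j hj hne => ?_) (fun h => ?_)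
    · rw [huniq j (Finset.mem_filter.mp hj).2 hne, zero_mul]
    · exact absurd (Finset.mem_filter.mpr ⟨Finset.mem_univ j', hj'⟩) h
  have hU0 : U 0 = X j' := by
    have : ip (0 : Fin n → ZMod 2) j' = 0 := by simp [ip]
    rw [hUcollapse, this, sgn_zero', mul_one]
  have hratio : ∀ p, U p / U 0 = sgn (ip p j') := by
    intro p
    rw [hUcollapse, hU0, mul_div_assoc]; field_simp
  refine ⟨fun d _ => hratio (col d), ?_⟩
  have hip : ∀ i : Fin n, ip (col i) j' = Aᵀ.mulVec j' i := by
    intro i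
    simp [ip, col, Matrix.mulVec, dotProduct, Matrix.transpose]
  have hw : (Psi n b hb.le k +
      (fun i : Fin n => if (i : ℕ) < n - b ∧ U (col i) / U 0 < 0 then 1 else 0))
      = Aᵀ.mulVec j' := by
    funext i
    by_cases hi : (i : ℕ) < n - b
    · have : (U (col i) / U 0 < 0) ↔ Aᵀ.mulVec j' i = 1 := by
        rw [hratio, sgn_neg_iff, hip]
      simp only [Pi.add_apply, Psi, dif_pos hi, zero_add]
      by_cases h1 : Aᵀ.mulVec j' i = 1
      · rw [if_pos ⟨hi, this.mpr h1⟩, h1]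
      · rw [if_neg (fun hc : _ ∧ _ => h1 (this.mp hc.2))]
        have : Aᵀ.mulVec j' i = 0 := by
          have := h1; revert this; generalize Aᵀ.mulVec j' i = a; revert a; decide
        rw [this]
    · simp only [Pi.add_apply, Psi, dif_neg hi, if_neg (fun hc : _ ∧ _ => hi hc.1), add_zero]
      have h2 := congrFun hj' ⟨(i : ℕ) - (n - b), by have := i.isLt; omega⟩
      simp only [PsiT] at h2
      rw [← h2]
      congr 1
      exact Fin.ext (by simp; omega)
  rw [hw, Matrix.mulVec_mulVec, Matrix.transpose_nonsing_inv,
    Matrix.nonsing_inv_mul Aᵀ (by simpa using hA), Matrix.one_mulVec]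
end
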